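/- Let D ∈ F_{Q_{a−2}}^{r×a} be an interference matrix, i.e., a matrix D = (d_{i,j}) with d_{i,j} = 0 for j ∈ {0,1} and d_{i,j} ∈ F_{Q_{j−1}} for 2 ≤ j ≤ a−1. Then every square submatrix of Γ + D is nonsingular: for all index sets I ⊆ {0,…,r−1} and J ⊆ {0,…,a−1} with |I| = |J|, the determinant of the submatrix of Γ + D with rows I and columns J is nonzero. -/

import Mathlib

/-- Every square submatrix of `M` is nonsingular. -/
def AllSquareSubmatricesNonsingular {K : Type} [Field K] {r a : ℕ}
    (M : Matrix (Fin r) (Fin a) K) : Prop :=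
  ∀ (z : ℕ) (ρ : Fin z → Fin r) (σ : Fin z → Fin a),
    Function.Injective ρ → Function.Injective σ → (M.submatrix ρ σ).det ≠ 0

/-- `Γ = C ⬝ diag(α₀,…,α_{a-1})`, i.e. the `j`-th column of `C` scaled by `α j`. -/
def gammaMatrix {K : Type} [Field K] {r a : ℕ} (C : Matrix (Fin r) (Fin a) K)
    (α : Fin a → K) : Matrix (Fin r) (Fin a) K :=
  Matrix.of fun i j => C i j * α j

/-- A determinant of a matrix with entries in a subfield lies in the subfield. -/
lemma det_mem_subfield {K : Type} [Field K] {n : ℕ} (S : Subfield K)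
    (M : Matrix (Fin n) (Fin n) K) (h : ∀ i j, M i j ∈ S) : M.det ∈ S := by
  rw [Matrix.det_apply']
  exact S.sum_mem fun σ _ => S.mul_mem (S.intCast_mem _) (S.prod_mem fun i _ => h _ _)

theorem gamma_plus_interference_nonsingular
    (K : Type) [Field K] [Fintype K] (q a r : ℕ)
    (hq : IsPrimePow q) (ha : 2 ≤ a) (hr : 1 ≤ r)
    (Fsub : ℕ → Subfield K) (hmono : Monotone Fsub)
    (hcard : ∀ j ≤ a - 1, Nat.card (Fsub j) = q ^ 2 ^ (j - 1))
    (htop : Fsub (a - 1) = ⊤)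
    (C : Matrix (Fin r) (Fin a) K) (hC : ∀ i j, C i j ∈ Fsub 0)
    (hCns : AllSquareSubmatricesNonsingular C)
    (α : Fin a → K)
    (hα01 : ∀ j : Fin a, (j : ℕ) ≤ 1 → α j = 1)
    (hαmem : ∀ j : Fin a, 2 ≤ (j : ℕ) → α j ∈ Fsub (j : ℕ) ∧ α j ∉ Fsub ((j : ℕ) - 1))
    (D : Matrix (Fin r) (Fin a) K)
    (hD0 : ∀ (i : Fin r) (j : Fin a), (j : ℕ) ≤ 1 → D i j = 0)
    (hDmem : ∀ (i : Fin r) (j : Fin a), 2 ≤ (j : ℕ) → D i j ∈ Fsub ((j : ℕ) - 1)) :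
    AllSquareSubmatricesNonsingular (gammaMatrix C α + D) := by
  intro z ρ σ hρ hσ
  -- the matrix whose column `k` is either the full `(Γ+D)` column (when `f k`)
  -- or the corresponding column of `C` (when `¬ f k`)
  set N : (Fin z → Bool) → Matrix (Fin z) (Fin z) K := fun f =>
    Matrix.of fun i k =>
      if f k then (gammaMatrix C α + D) (ρ i) (σ k) else C (ρ i) (σ k) with hN
  have key : ∀ (n : ℕ) (f : Fin z → Bool),
      (Finset.univ.filter fun k => f k = true ∧ 2 ≤ (σ k : ℕ)).card = n →
      (N f).det ≠ 0 := by
    intro n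
    induction n with
    | zero =>
      intro f hf
      have hempty : ∀ k : Fin z, f k = true → ¬ 2 ≤ (σ k : ℕ) := by
        intro k hk h2
        have : k ∈ Finset.univ.filter fun k => f k = true ∧ 2 ≤ (σ k : ℕ) := by
          simp [hk, h2]
        rw [Finset.card_eq_zero.mp hf] at this
        exact absurd this (Finset.notMem_empty k)
      have hNC : N f = C.submatrix ρ σ := by
        ext i k
        by_cases hk : f k = true
        · have hle : (σ k : ℕ) ≤ 1 := by
            have := hempty k hk
            omega
          simp [hN, hk, gammaMatrix, Matrix.submatrix_apply, hα01 _ hle, hD0 _ _ hle]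
        · simp [hN, hk, Matrix.submatrix_apply]
      rw [hNC]
      exact hCns z ρ σ hρ hσ
    | succ n ih =>
      intro f hf
      set T := Finset.univ.filter fun k => f k = true ∧ 2 ≤ (σ k : ℕ) with hT
      have hTne : T.Nonempty := Finset.card_pos.mp (by omega)
      obtain ⟨k, hkT, hkmax⟩ := Finset.exists_max_image T (fun k => (σ k : ℕ)) hTne
      have hfk : f k = true := (Finset.mem_filter.mp hkT).2.1
      have hj2 : 2 ≤ (σ k : ℕ) := (Finset.mem_filter.mp hkT).2.2
      set j : Fin a := σ k with hj
      set S : Subfield K := Fsub ((j : ℕ) - 1) with hS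
      set f' : Fin z → Bool := Function.update f k false with hf'
      have hf'k : f' k = false := by simp [hf']
      have hf'ne : ∀ k', k' ≠ k → f' k' = f k' := by
        intro k' hk'
        simp [hf', Function.update_of_ne hk']
      -- filter for f' is the erase of the filter for f
      have hcard' : (Finset.univ.filter fun k' => f' k' = true ∧ 2 ≤ (σ k' : ℕ)).card = n := by
        have : (Finset.univ.filter fun k' => f' k' = true ∧ 2 ≤ (σ k' : ℕ)) = T.erase k := by
          ext k'
          by_cases hk' : k' = k
          · subst hk'
            simp [hf'k]
          · simp [Finset.mem_erase, hk', hT, hf'ne k' hk']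
        rw [this, Finset.card_erase_of_mem hkT, hf]
        omega
      -- every entry of `N f'` lies in `S`, and also all entries of `N f` outside column `k`
      have hmem' : ∀ (i k' : Fin z), N f' i k' ∈ S := by
        intro i k'
        by_cases hfk' : f' k' = true
        · have hk'k : k' ≠ k := by
            intro h; rw [h, hf'k] at hfk'; exact absurd hfk' (by simp)
          have hfk'' : f k' = true := by rw [← hf'ne k' hk'k]; exact hfk'
          by_cases h2 : 2 ≤ (σ k' : ℕ)
          · -- k' ∈ T, so σ k' ≤ σ k, and σ k' ≠ σ k
            have hk'T : k' ∈ T := by simp [hT, hfk'', h2]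
            have hle : (σ k' : ℕ) ≤ (σ k : ℕ) := hkmax k' hk'T
            have hneq : (σ k' : ℕ) ≠ (σ k : ℕ) := by
              intro h
              exact hk'k (hσ (Fin.ext h))
            have hle' : (σ k' : ℕ) ≤ (j : ℕ) - 1 := by omega
            have : (gammaMatrix C α + D) (ρ i) (σ k') ∈ Fsub (σ k' : ℕ) := by
              have h1 : C (ρ i) (σ k') * α (σ k') ∈ Fsub (σ k' : ℕ) :=
                (Fsub _).mul_mem (hmono (Nat.zero_le _) (hC _ _)) (hαmem _ h2).1
              have h2' : D (ρ i) (σ k') ∈ Fsub (σ k' : ℕ) :=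
                hmono (Nat.sub_le _ _) (hDmem _ _ h2)
              simpa [gammaMatrix] using (Fsub _).add_mem h1 h2'
            have := hmono hle' this
            simpa [hN, hfk'] using this
          · have hle : (σ k' : ℕ) ≤ 1 := by omega
            have : (gammaMatrix C α + D) (ρ i) (σ k') = C (ρ i) (σ k') := by
              simp [gammaMatrix, hα01 _ hle, hD0 _ _ hle]
            rw [hN]
            simp only [Matrix.of_apply, hfk', if_true, this]
            exact hmono (Nat.zero_le _) (hC _ _)
        · have : f' k' = false := by
            cases hb : f' k'
            · rfl
            · exact absurd hb hfk'
          rw [hN]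
          simp only [Matrix.of_apply, this]
          exact hmono (Nat.zero_le _) (hC _ _)
      -- decomposition of det (N f)
      have hdecomp : (N f).det
          = α j * (N f').det
            + (Matrix.updateCol (N f') k (fun i => D (ρ i) j)).det := by
        have hNf : N f = Matrix.updateCol (N f') k
            ((α j • fun i => C (ρ i) j) + fun i => D (ρ i) j) := by
          ext i k'
          by_cases hk' : k' = k
          · subst hk'
            simp [hN, Matrix.updateCol_apply, hfk, gammaMatrix, mul_comm, hj]
          · simp [hN, Matrix.updateCol_apply, hk', hf'ne k' hk']
        rw [hNf, Matrix.det_updateCol_add, Matrix.det_updateCol_smul]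
        congr 1
        have hcol : (fun i => C (ρ i) j) = fun i => N f' i k := by
          funext i
          simp [hN, hf'k, hj]
        rw [hcol, Matrix.updateCol_eq_self]
      set X : K := (N f').det with hX
      set Y : K := (Matrix.updateCol (N f') k (fun i => D (ρ i) j)).det with hY
      have hXne : X ≠ 0 := ih f' hcard'
      have hXS : X ∈ S := det_mem_subfield S _ hmem'
      have hYS : Y ∈ S := by
        apply det_mem_subfield S
        intro i k'
        by_cases hk' : k' = k
        · subst hk'
          simp only [Matrix.updateCol_apply, if_pos rfl]
          exact hDmem _ _ hj2
        · simp only [Matrix.updateCol_apply, if_neg hk']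
          exact hmem' i k'
      have hαnot : α j ∉ S := (hαmem j hj2).2
      rw [hdecomp]
      intro hzero
      apply hαnot
      have h1 : α j * X = -Y := by linear_combination hzero
      have h2 : α j = -Y * X⁻¹ := by
        rw [← h1, mul_assoc, mul_inv_cancel₀ hXne, mul_one]
      rw [h2]
      exact S.mul_mem (S.neg_mem hYS) (S.inv_mem hXS)
  have h := key _ (fun _ => true) rfl
  have hNe : N (fun _ => true) = (gammaMatrix C α + D).submatrix ρ σ := by
    ext i k
    simp [hN]
  rwa [hNe] at h
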